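/- arXiv:1810.02395 — 3 statements merged into one kernel-verified Lean document; each statement's English description precedes it below -/
import Mathlib

section
/- $L^2$-boundedness of the Laplace transform: For every $\phi\in L^2(0,\infty)$, the Laplace transform $\mathcal{L}\{\phi\}(x)=\int_0^\infty e^{-kx}\phi(k)\,dk$ defines a function in $L^2(0,\infty)$ and satisfies $\|\mathcal{L}\{\phi\}\|_{L^2(0,\infty)}\le\sqrt{\pi}\,\|\phi\|_{L^2(0,\infty)}$. -/
open MeasureTheory Set
open scoped ENNReal NNReal Topology

section LaplaceAux

open Real

open MeasureTheory Set Real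

lemma laplace_key {r : ℝ} (hr : 0 < r) :
    ∫⁻ t in Ioi (0:ℝ), ENNReal.ofReal (t ^ (-(2:ℝ)⁻¹) * Real.exp (-(r * t))) =
      ENNReal.ofReal (Real.sqrt Real.pi * r ^ (-(2:ℝ)⁻¹)) := by
  have hint : IntegrableOn (fun t : ℝ => t ^ (-(2:ℝ)⁻¹) * Real.exp (-(r * t))) (Ioi 0) := by
    have h := integrableOn_rpow_mul_exp_neg_mul_rpow (s := -(2:ℝ)⁻¹) (p := 1) (b := r)
      (by norm_num) one_pos hr
    simpa [Real.rpow_one] using h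
  rw [← ofReal_integral_eq_lintegral_ofReal hint ?_]
  · congr 1
    have h := integral_rpow_mul_exp_neg_mul_Ioi (a := 1/2) (r := r) (by norm_num) hr
    have he : (1/2 : ℝ) - 1 = -(2:ℝ)⁻¹ := by norm_num
    rw [he] at h
    rw [h, Real.Gamma_one_half_eq, one_div, Real.inv_rpow hr.le, ← Real.rpow_neg hr.le]
    rw [mul_comm]
    norm_num
  · filter_upwards [self_mem_ae_restrict (measurableSet_Ioi : MeasurableSet (Ioi (0:ℝ)))] with t ht
    exact mul_nonneg (Real.rpow_nonneg (le_of_lt ht) _) (Real.exp_pos _).le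


lemma rpow_two_of_nonneg {a : ℝ} (ha : 0 ≤ a) : a ^ (2:ℝ) = a * a := by
  rw [show (2:ℝ) = ((2:ℕ):ℝ) by norm_num, Real.rpow_natCast]; ring

lemma laplace_pointwise (ψ : ℝ → ℂ) (hψ : Measurable ψ) {x : ℝ} (hx : 0 < x)
    (hA : ∫⁻ k in Ioi (0:ℝ), ENNReal.ofReal (k ^ (-(2:ℝ)⁻¹) * Real.exp (-(x * k))) =
      ENNReal.ofReal (Real.sqrt Real.pi * x ^ (-(2:ℝ)⁻¹))) :
    (‖∫ k in Ioi (0:ℝ), Complex.exp (-((k:ℂ) * (x:ℂ))) * ψ k‖₊ : ℝ≥0∞) ^ (2:ℝ)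
      ≤ ENNReal.ofReal (Real.sqrt Real.pi * x ^ (-(2:ℝ)⁻¹)) *
        ∫⁻ k in Ioi (0:ℝ), ENNReal.ofReal (Real.exp (-(x * k)) * k ^ ((2:ℝ)⁻¹)) *
          (‖ψ k‖₊ : ℝ≥0∞) ^ (2:ℝ) := by
  set u : ℝ → ℝ := fun k => Real.exp (-(k * x) / 2) * k ^ (-(4:ℝ)⁻¹) with hu
  set v : ℝ → ℝ := fun k => Real.exp (-(k * x) / 2) * k ^ ((4:ℝ)⁻¹) * ‖ψ k‖ with hv
  have hu_meas : Measurable u := by fun_prop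
  have hv_meas : Measurable v := by fun_prop
  -- Step 1: norm of integral ≤ ∫⁻ (ofReal ∘ u) * (ofReal ∘ v)
  have h1 : (‖∫ k in Ioi (0:ℝ), Complex.exp (-((k:ℂ) * (x:ℂ))) * ψ k‖₊ : ℝ≥0∞)
      ≤ ∫⁻ k in Ioi (0:ℝ), ENNReal.ofReal (u k) * ENNReal.ofReal (v k) := by
    refine (enorm_integral_le_lintegral_enorm _).trans (le_of_eq ?_)
    refine setLIntegral_congr_fun measurableSet_Ioi (fun k hk => ?_)
    have hk : (0:ℝ) < k := hk
    rw [← ENNReal.ofReal_mul (mul_nonneg (Real.exp_pos _).le (Real.rpow_nonneg hk.le _))]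
    rw [← ofReal_norm_eq_enorm]
    congr 1
    have hnorm : ‖Complex.exp (-((k:ℂ) * (x:ℂ))) * ψ k‖ = Real.exp (-(k * x)) * ‖ψ k‖ := by
      rw [norm_mul, Complex.norm_exp]
      norm_num
    rw [hnorm]
    have hek : Real.exp (-(k * x) / 2) * Real.exp (-(k * x) / 2) = Real.exp (-(k * x)) := by
      rw [← Real.exp_add]; ring_nf
    have hkk : (k:ℝ) ^ (-(4:ℝ)⁻¹) * k ^ ((4:ℝ)⁻¹) = 1 := by
      rw [← Real.rpow_add hk]; norm_num
    calc Real.exp (-(k * x)) * ‖ψ k‖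
        = (Real.exp (-(k * x) / 2) * Real.exp (-(k * x) / 2)) *
            ((k:ℝ) ^ (-(4:ℝ)⁻¹) * k ^ ((4:ℝ)⁻¹)) * ‖ψ k‖ := by rw [hek, hkk]; ring
      _ = Real.exp (-(k * x) / 2) * k ^ (-(4:ℝ)⁻¹) *
            (Real.exp (-(k * x) / 2) * k ^ ((4:ℝ)⁻¹) * ‖ψ k‖) := by ring
  -- Step 2: Hölder
  have hpq : Real.HolderConjugate 2 2 := Real.HolderConjugate.two_two
  have h2 := ENNReal.lintegral_mul_le_Lp_mul_Lq (volume.restrict (Ioi (0:ℝ))) hpq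
    (by fun_prop : AEMeasurable (fun k => ENNReal.ofReal (u k)) _)
    (by fun_prop : AEMeasurable (fun k => ENNReal.ofReal (v k)) _)
  simp only [Pi.mul_apply] at h2
  -- Step 3: compute ∫⁻ (ofReal u)^2
  have h3 : ∫⁻ k in Ioi (0:ℝ), ENNReal.ofReal (u k) ^ (2:ℝ) =
      ENNReal.ofReal (Real.sqrt Real.pi * x ^ (-(2:ℝ)⁻¹)) := by
    rw [← hA]
    refine setLIntegral_congr_fun measurableSet_Ioi (fun k hk => ?_)
    have hk : (0:ℝ) < k := hk
    rw [ENNReal.ofReal_rpow_of_nonneg (mul_nonneg (Real.exp_pos _).le (Real.rpow_nonneg hk.le _))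
      (by norm_num : (0:ℝ) ≤ 2)]
    congr 1
    rw [rpow_two_of_nonneg (mul_nonneg (Real.exp_pos _).le (Real.rpow_nonneg hk.le _))]
    have hek : Real.exp (-(k * x) / 2) * Real.exp (-(k * x) / 2) = Real.exp (-(x * k)) := by
      rw [← Real.exp_add]; ring_nf
    have hkk : (k:ℝ) ^ (-(4:ℝ)⁻¹) * k ^ (-(4:ℝ)⁻¹) = k ^ (-(2:ℝ)⁻¹) := by
      rw [← Real.rpow_add hk]; norm_num
    calc (Real.exp (-(k * x) / 2) * k ^ (-(4:ℝ)⁻¹)) * (Real.exp (-(k * x) / 2) * k ^ (-(4:ℝ)⁻¹))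
        = (Real.exp (-(k * x) / 2) * Real.exp (-(k * x) / 2)) *
            ((k:ℝ) ^ (-(4:ℝ)⁻¹) * k ^ (-(4:ℝ)⁻¹)) := by ring
      _ = k ^ (-(2:ℝ)⁻¹) * Real.exp (-(x * k)) := by rw [hek, hkk]; ring
  -- Step 4: compute ∫⁻ (ofReal v)^2
  have h4 : ∫⁻ k in Ioi (0:ℝ), ENNReal.ofReal (v k) ^ (2:ℝ) =
      ∫⁻ k in Ioi (0:ℝ), ENNReal.ofReal (Real.exp (-(x * k)) * k ^ ((2:ℝ)⁻¹)) *
        (‖ψ k‖₊ : ℝ≥0∞) ^ (2:ℝ) := by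
    refine setLIntegral_congr_fun measurableSet_Ioi (fun k hk => ?_)
    have hk : (0:ℝ) < k := hk
    have hvnn : 0 ≤ v k :=
      mul_nonneg (mul_nonneg (Real.exp_pos _).le (Real.rpow_nonneg hk.le _)) (norm_nonneg _)
    rw [ENNReal.ofReal_rpow_of_nonneg hvnn (by norm_num : (0:ℝ) ≤ 2)]
    rw [← enorm_eq_nnnorm, ← ofReal_norm_eq_enorm,
      ENNReal.ofReal_rpow_of_nonneg (norm_nonneg _) (by norm_num : (0:ℝ) ≤ 2)]
    rw [← ENNReal.ofReal_mul (mul_nonneg (Real.exp_pos _).le (Real.rpow_nonneg hk.le _))]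
    congr 1
    rw [rpow_two_of_nonneg hvnn, rpow_two_of_nonneg (norm_nonneg _)]
    have hek : Real.exp (-(k * x) / 2) * Real.exp (-(k * x) / 2) = Real.exp (-(x * k)) := by
      rw [← Real.exp_add]; ring_nf
    have hkk : (k:ℝ) ^ ((4:ℝ)⁻¹) * k ^ ((4:ℝ)⁻¹) = k ^ ((2:ℝ)⁻¹) := by
      rw [← Real.rpow_add hk]; norm_num
    calc v k * v k
        = (Real.exp (-(k * x) / 2) * Real.exp (-(k * x) / 2)) *
            ((k:ℝ) ^ ((4:ℝ)⁻¹) * k ^ ((4:ℝ)⁻¹)) * (‖ψ k‖ * ‖ψ k‖) := by rw [hv]; ring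
      _ = Real.exp (-(x * k)) * k ^ ((2:ℝ)⁻¹) * (‖ψ k‖ * ‖ψ k‖) := by rw [hek, hkk]
  rw [h3, h4] at h2
  -- Step 5: assemble
  calc (‖∫ k in Ioi (0:ℝ), Complex.exp (-((k:ℂ) * (x:ℂ))) * ψ k‖₊ : ℝ≥0∞) ^ (2:ℝ)
      ≤ ((ENNReal.ofReal (Real.sqrt Real.pi * x ^ (-(2:ℝ)⁻¹))) ^ (1/2:ℝ) *
          (∫⁻ k in Ioi (0:ℝ), ENNReal.ofReal (Real.exp (-(x * k)) * k ^ ((2:ℝ)⁻¹)) *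
            (‖ψ k‖₊ : ℝ≥0∞) ^ (2:ℝ)) ^ (1/2:ℝ)) ^ (2:ℝ) :=
        ENNReal.rpow_le_rpow (h1.trans h2) (by norm_num)
    _ = _ := by
        rw [ENNReal.mul_rpow_of_nonneg _ _ (by norm_num : (0:ℝ) ≤ 2),
          ← ENNReal.rpow_mul, ← ENNReal.rpow_mul]
        norm_num

lemma laplace_lintegral_bound (ψ : ℝ → ℂ) (hψ : Measurable ψ) :
    ∫⁻ x in Ioi (0:ℝ), (‖∫ k in Ioi (0:ℝ), Complex.exp (-((k:ℂ) * (x:ℂ))) * ψ k‖₊ : ℝ≥0∞) ^ (2:ℝ)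
      ≤ ENNReal.ofReal Real.pi * ∫⁻ k in Ioi (0:ℝ), (‖ψ k‖₊ : ℝ≥0∞) ^ (2:ℝ) := by
  set H : ℝ → ℝ → ℝ≥0∞ := fun x k =>
    ENNReal.ofReal (Real.sqrt Real.pi * x ^ (-(2:ℝ)⁻¹)) *
      (ENNReal.ofReal (Real.exp (-(x * k)) * k ^ ((2:ℝ)⁻¹)) * (‖ψ k‖₊ : ℝ≥0∞) ^ (2:ℝ)) with hH
  have hCne : ∀ k : ℝ, (‖ψ k‖₊ : ℝ≥0∞) ^ (2:ℝ) ≠ ∞ :=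
    fun k => ENNReal.rpow_ne_top_of_nonneg (by norm_num) ENNReal.coe_ne_top
  calc ∫⁻ x in Ioi (0:ℝ), (‖∫ k in Ioi (0:ℝ), Complex.exp (-((k:ℂ) * (x:ℂ))) * ψ k‖₊ : ℝ≥0∞) ^ (2:ℝ)
      ≤ ∫⁻ x in Ioi (0:ℝ), ∫⁻ k in Ioi (0:ℝ), H x k := by
        refine lintegral_mono_ae ?_
        filter_upwards [self_mem_ae_restrict (measurableSet_Ioi : MeasurableSet (Ioi (0:ℝ)))]
          with x hx
        have hx : (0:ℝ) < x := hx
        refine (laplace_pointwise ψ hψ hx (laplace_key hx)).trans (le_of_eq ?_)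
        rw [hH]
        rw [lintegral_const_mul' _ _ ENNReal.ofReal_ne_top]
    _ = ∫⁻ k in Ioi (0:ℝ), ∫⁻ x in Ioi (0:ℝ), H x k := by
        rw [lintegral_lintegral_swap]
        fun_prop
    _ = ∫⁻ k in Ioi (0:ℝ), ENNReal.ofReal Real.pi * (‖ψ k‖₊ : ℝ≥0∞) ^ (2:ℝ) := by
        refine setLIntegral_congr_fun measurableSet_Ioi (fun k hk => ?_)
        have hk : (0:ℝ) < k := hk
        set C : ℝ≥0∞ := (‖ψ k‖₊ : ℝ≥0∞) ^ (2:ℝ) with hC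
        have step : ∀ x ∈ Ioi (0:ℝ), H x k =
            (ENNReal.ofReal (Real.sqrt Real.pi * k ^ ((2:ℝ)⁻¹)) * C) *
              ENNReal.ofReal (x ^ (-(2:ℝ)⁻¹) * Real.exp (-(k * x))) := by
          intro x hx
          have hx : (0:ℝ) < x := hx
          have key : ENNReal.ofReal (Real.sqrt Real.pi * x ^ (-(2:ℝ)⁻¹)) *
              ENNReal.ofReal (Real.exp (-(x * k)) * k ^ ((2:ℝ)⁻¹)) =
              ENNReal.ofReal (Real.sqrt Real.pi * k ^ ((2:ℝ)⁻¹)) *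
                ENNReal.ofReal (x ^ (-(2:ℝ)⁻¹) * Real.exp (-(k * x))) := by
            rw [← ENNReal.ofReal_mul (mul_nonneg (Real.sqrt_nonneg _) (Real.rpow_nonneg hx.le _)),
              ← ENNReal.ofReal_mul (mul_nonneg (Real.sqrt_nonneg _) (Real.rpow_nonneg hk.le _))]
            rw [show -(x * k) = -(k * x) from by ring]
            congr 1
            ring
          calc H x k = (ENNReal.ofReal (Real.sqrt Real.pi * x ^ (-(2:ℝ)⁻¹)) *
                ENNReal.ofReal (Real.exp (-(x * k)) * k ^ ((2:ℝ)⁻¹))) * C := by rw [hH]; ring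
            _ = (ENNReal.ofReal (Real.sqrt Real.pi * k ^ ((2:ℝ)⁻¹)) *
                ENNReal.ofReal (x ^ (-(2:ℝ)⁻¹) * Real.exp (-(k * x)))) * C := by rw [key]
            _ = _ := by ring
        rw [setLIntegral_congr_fun measurableSet_Ioi step]
        rw [lintegral_const_mul' _ _
          (ENNReal.mul_ne_top ENNReal.ofReal_ne_top (hCne k)), laplace_key hk]
        have : Real.sqrt Real.pi * k ^ ((2:ℝ)⁻¹) * (Real.sqrt Real.pi * k ^ (-(2:ℝ)⁻¹)) =
            Real.pi := by
          have h1 : Real.sqrt Real.pi * Real.sqrt Real.pi = Real.pi :=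
            Real.mul_self_sqrt Real.pi_pos.le
          have h2 : (k:ℝ) ^ ((2:ℝ)⁻¹) * k ^ (-(2:ℝ)⁻¹) = 1 := by
            rw [← Real.rpow_add hk]; norm_num
          calc Real.sqrt Real.pi * k ^ ((2:ℝ)⁻¹) * (Real.sqrt Real.pi * k ^ (-(2:ℝ)⁻¹))
              = (Real.sqrt Real.pi * Real.sqrt Real.pi) *
                ((k:ℝ) ^ ((2:ℝ)⁻¹) * k ^ (-(2:ℝ)⁻¹)) := by ring
            _ = Real.pi := by rw [h1, h2]; ring
        rw [mul_right_comm, ← ENNReal.ofReal_mul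
          (mul_nonneg (Real.sqrt_nonneg _) (Real.rpow_nonneg hk.le _)), this]
    _ = ENNReal.ofReal Real.pi * ∫⁻ k in Ioi (0:ℝ), (‖ψ k‖₊ : ℝ≥0∞) ^ (2:ℝ) := by
        rw [lintegral_const_mul' _ _ ENNReal.ofReal_ne_top]

lemma laplace_cont (ψ : ℝ → ℂ) (hψm : Measurable ψ)
    (hψ : MemLp ψ 2 (volume.restrict (Ioi (0:ℝ)))) {x : ℝ} (hx : 0 < x) :
    ContinuousAt (fun y : ℝ => ∫ k in Ioi (0:ℝ), Complex.exp (-((k:ℂ) * (y:ℂ))) * ψ k) x := by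
  have hx2 : 0 < x / 2 := by linarith
  -- the L² exponential
  have he2 : MemLp (fun k : ℝ => Real.exp (-(x/2) * k)) 2 (volume.restrict (Ioi (0:ℝ))) := by
    have haesm : AEStronglyMeasurable (fun k : ℝ => Real.exp (-(x/2) * k))
        (volume.restrict (Ioi (0:ℝ))) :=
      (Measurable.aestronglyMeasurable (by fun_prop))
    rw [memLp_two_iff_integrable_sq haesm]
    have : (fun k : ℝ => Real.exp (-(x/2) * k) ^ 2) = fun k : ℝ => Real.exp (-x * k) := by
      funext k
      rw [sq, ← Real.exp_add]
      ring_nf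
    rw [this]
    exact exp_neg_integrableOn_Ioi 0 hx
  have hbi : Integrable (fun k : ℝ => Real.exp (-(x/2) * k) * ‖ψ k‖)
      (volume.restrict (Ioi (0:ℝ))) := by
    have := (hψ.norm.smul he2 (r := 1))
    rw [memLp_one_iff_integrable] at this
    simpa [smul_eq_mul, mul_comm, Pi.mul_def] using this
  refine continuousAt_of_dominated ?_ ?_ hbi ?_
  · filter_upwards with y
    exact Measurable.aestronglyMeasurable (by fun_prop)
  · filter_upwards [eventually_gt_nhds (by linarith : x/2 < x)] with y hy
    filter_upwards [self_mem_ae_restrict (measurableSet_Ioi : MeasurableSet (Ioi (0:ℝ)))] with k hk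
    have hk : (0:ℝ) < k := hk
    have hnorm : ‖Complex.exp (-((k:ℂ) * (y:ℂ))) * ψ k‖ = Real.exp (-(k * y)) * ‖ψ k‖ := by
      rw [norm_mul, Complex.norm_exp]
      norm_num
    rw [hnorm]
    have : Real.exp (-(k * y)) ≤ Real.exp (-(x/2) * k) := by
      apply Real.exp_le_exp.mpr
      nlinarith
    exact mul_le_mul_of_nonneg_right this (norm_nonneg _)
  · filter_upwards with k
    exact Continuous.continuousAt (by fun_prop)


end LaplaceAux

/-- **$L^2$-boundedness of the Laplace transform.**
For every `φ ∈ L²(0,∞)`, the Laplace transform `x ↦ ∫_0^∞ e^{-k x} φ(k) dk`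
belongs to `L²(0,∞)` and its `L²` norm is at most `√π` times that of `φ`. -/
theorem laplace_transform_L2_bound (φ : ℝ → ℂ)
    (hφ : MemLp φ 2 (volume.restrict (Ioi (0:ℝ)))) :
    MemLp (fun x : ℝ => ∫ k in Ioi (0:ℝ), Complex.exp (-((k:ℂ) * (x:ℂ))) * φ k) 2
      (volume.restrict (Ioi (0:ℝ))) ∧
    eLpNorm (fun x : ℝ => ∫ k in Ioi (0:ℝ), Complex.exp (-((k:ℂ) * (x:ℂ))) * φ k) 2
        (volume.restrict (Ioi (0:ℝ)))
      ≤ ENNReal.ofReal (Real.sqrt Real.pi) * eLpNorm φ 2 (volume.restrict (Ioi (0:ℝ))) := by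
  have hm := hφ.1
  set ψ : ℝ → ℂ := hm.mk φ with hψdef
  have hψsm : StronglyMeasurable ψ := hm.stronglyMeasurable_mk
  have hψm : Measurable ψ := hψsm.measurable
  have hae : φ =ᵐ[volume.restrict (Ioi (0:ℝ))] ψ := hm.ae_eq_mk
  have hψ : MemLp ψ 2 (volume.restrict (Ioi (0:ℝ))) := hφ.ae_eq hae
  have hFG : (fun x : ℝ => ∫ k in Ioi (0:ℝ), Complex.exp (-((k:ℂ) * (x:ℂ))) * φ k)
      = fun x : ℝ => ∫ k in Ioi (0:ℝ), Complex.exp (-((k:ℂ) * (x:ℂ))) * ψ k := by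
    funext x
    exact integral_congr_ae (hae.mono fun k hk => by simp only []; rw [hk])
  rw [hFG, eLpNorm_congr_ae hae]
  have hGm : AEStronglyMeasurable
      (fun x : ℝ => ∫ k in Ioi (0:ℝ), Complex.exp (-((k:ℂ) * (x:ℂ))) * ψ k)
      (volume.restrict (Ioi (0:ℝ))) :=
    (continuousOn_of_forall_continuousAt fun x hx => laplace_cont ψ hψm hψ hx).aestronglyMeasurable
      measurableSet_Ioi
  have h2 : ∀ f : ℝ → ℂ, eLpNorm f 2 (volume.restrict (Ioi (0:ℝ))) =
      (∫⁻ x in Ioi (0:ℝ), (‖f x‖₊ : ℝ≥0∞) ^ (2:ℝ)) ^ ((1:ℝ)/2) := by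
    intro f
    rw [eLpNorm_eq_lintegral_rpow_enorm_toReal (by norm_num) (by norm_num)]
    norm_num [enorm_eq_nnnorm]
  have hle : eLpNorm (fun x : ℝ => ∫ k in Ioi (0:ℝ), Complex.exp (-((k:ℂ) * (x:ℂ))) * ψ k) 2
        (volume.restrict (Ioi (0:ℝ)))
      ≤ ENNReal.ofReal (Real.sqrt Real.pi) * eLpNorm ψ 2 (volume.restrict (Ioi (0:ℝ))) := by
    rw [h2, h2]
    calc (∫⁻ x in Ioi (0:ℝ),
            (‖∫ k in Ioi (0:ℝ), Complex.exp (-((k:ℂ) * (x:ℂ))) * ψ k‖₊ : ℝ≥0∞) ^ (2:ℝ)) ^ ((1:ℝ)/2)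
        ≤ (ENNReal.ofReal Real.pi *
            ∫⁻ k in Ioi (0:ℝ), (‖ψ k‖₊ : ℝ≥0∞) ^ (2:ℝ)) ^ ((1:ℝ)/2) :=
          ENNReal.rpow_le_rpow (laplace_lintegral_bound ψ hψm) (by norm_num)
      _ = ENNReal.ofReal (Real.sqrt Real.pi) *
            (∫⁻ k in Ioi (0:ℝ), (‖ψ k‖₊ : ℝ≥0∞) ^ (2:ℝ)) ^ ((1:ℝ)/2) := by
          rw [ENNReal.mul_rpow_of_nonneg _ _ (by norm_num : (0:ℝ) ≤ 1/2)]
          congr 1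
          rw [ENNReal.ofReal_rpow_of_pos Real.pi_pos, ← Real.sqrt_eq_rpow]
  exact ⟨⟨hGm, lt_of_le_of_lt hle
    (ENNReal.mul_lt_top ENNReal.ofReal_lt_top hψ.2)⟩, hle⟩
end

section
/- Kernel integral bound: For $\beta\in(0,1)$, $k_1\in\mathbb{R}$ and $k_2>0$, define $I(k_1,k_2,\beta)=\int_{z_1\in\mathbb{R}}\int_{z_2=0}^\infty\frac{|e^{ik_1z_1-k_2z_2}-1|^2}{(z_1^2+z_2^2)^{1+\beta}}\,dz_2\,dz_1$. Then there exists a constant $c_\beta>0$ depending only on $\beta$ such that $I(k_1,k_2,\beta)\le c_\beta\,(k_1^2+k_2^2)^\beta$ for all $k_1\in\mathbb{R}$ and $k_2>0$. -/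
open MeasureTheory Set

open scoped ENNReal

private lemma kib_lintegral_comp_mul_left (f : ℝ → ℝ≥0∞) (hf : Measurable f) {a : ℝ}
    (ha : a ≠ 0) :
    ∫⁻ x : ℝ, f (a * x) = ENNReal.ofReal |a⁻¹| * ∫⁻ x : ℝ, f x := by
  calc ∫⁻ x : ℝ, f (a * x)
      = ∫⁻ y, f y ∂(Measure.map (a * ·) volume) :=
        (lintegral_map hf (measurable_const_mul a)).symm
    _ = ∫⁻ y, f y ∂(ENNReal.ofReal |a⁻¹| • volume) := by rw [Real.map_volume_mul_left ha]
    _ = ENNReal.ofReal |a⁻¹| * ∫⁻ x, f x := lintegral_smul_measure _ _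

open intervalIntegral in
private lemma kib_lint_Ioc_rpow {s : ℝ} (hs : -1 < s) :
    ∫⁻ x in Ioc (0:ℝ) 1, ENNReal.ofReal (x ^ s) = ENNReal.ofReal ((s + 1)⁻¹) := by
  rw [← ofReal_integral_eq_lintegral_ofReal]
  · congr 1
    rw [← intervalIntegral.integral_of_le zero_le_one, integral_rpow (Or.inl hs)]
    rw [Real.one_rpow, Real.zero_rpow (by linarith : s + 1 ≠ 0)]
    ring
  · exact (intervalIntegral.intervalIntegrable_rpow' hs).1
  · filter_upwards [ae_restrict_mem measurableSet_Ioc] with x hx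
    exact Real.rpow_nonneg hx.1.le _

private lemma kib_lint_Ioi_rpow {s : ℝ} (hs : s < -1) :
    ∫⁻ x in Ioi (1:ℝ), ENNReal.ofReal (x ^ s) = ENNReal.ofReal (-(s + 1)⁻¹) := by
  rw [← ofReal_integral_eq_lintegral_ofReal (integrableOn_Ioi_rpow_of_lt hs one_pos)]
  · congr 1
    rw [integral_Ioi_rpow_of_lt hs one_pos, Real.one_rpow]
    ring
  · filter_upwards [ae_restrict_mem measurableSet_Ioi] with x hx
    exact Real.rpow_nonneg (by linarith [mem_Ioi.1 hx] : (0:ℝ) ≤ x) _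

private lemma kib_norm_exp_I_mul_sub_one (a : ℝ) :
    ‖Complex.exp (Complex.I * a) - 1‖ ≤ |a| := by
  have hcos : 1 - Real.cos a ≤ a ^ 2 / 2 := by
    have h1 := Real.cos_two_mul (a / 2)
    rw [(by ring : 2 * (a / 2) = a)] at h1
    have h2 := Real.sin_sq_le_sq (x := a / 2)
    have h3 := Real.cos_sq' (a / 2)
    nlinarith
  have he : Complex.exp (Complex.I * a) = Complex.ofReal (Real.cos a) +
      Complex.ofReal (Real.sin a) * Complex.I := by
    rw [mul_comm, Complex.exp_mul_I]
    simp [Complex.ofReal_cos, Complex.ofReal_sin]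
  have hre : (Complex.exp (Complex.I * a) - 1).re = Real.cos a - 1 := by
    rw [he]; simp [Complex.cos_ofReal_re, Complex.sin_ofReal_re]
  have him : (Complex.exp (Complex.I * a) - 1).im = Real.sin a := by
    rw [he]; simp [Complex.cos_ofReal_im, Complex.sin_ofReal_re]
  have hn : ‖Complex.exp (Complex.I * a) - 1‖ ^ 2 = (Real.cos a - 1) ^ 2 + Real.sin a ^ 2 := by
    rw [Complex.sq_norm, Complex.normSq_apply, hre, him]; ring
  have h2 : ‖Complex.exp (Complex.I * a) - 1‖ ^ 2 ≤ |a| ^ 2 := by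
    rw [hn, sq_abs]
    nlinarith [Real.sin_sq_add_cos_sq a]
  nlinarith [norm_nonneg (Complex.exp (Complex.I * a) - 1), abs_nonneg a]

private lemma kib_norm_exp_le (a b : ℝ) (hb : 0 ≤ b) :
    ‖Complex.exp (Complex.I * a - b) - 1‖ ≤ min 2 (|a| + b) := by
  have hexpb : Real.exp (-b) ≤ 1 := Real.exp_le_one_iff.2 (by linarith)
  have hnorm_eb : ‖Complex.exp (-(b:ℂ))‖ = Real.exp (-b) := by
    rw [← Complex.ofReal_neg, ← Complex.ofReal_exp, Complex.norm_real,
      Real.norm_eq_abs, abs_of_pos (Real.exp_pos _)]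
  refine le_min ?_ ?_
  · have h1 : ‖Complex.exp (Complex.I * a - b)‖ ≤ 1 := by
      rw [Complex.norm_exp]
      have : (Complex.I * a - b).re = -b := by simp
      rw [this]; exact hexpb
    calc ‖Complex.exp (Complex.I * a - b) - 1‖ ≤ ‖Complex.exp (Complex.I * a - b)‖ + ‖(1:ℂ)‖ :=
          norm_sub_le _ _
      _ ≤ 2 := by rw [norm_one]; linarith
  · have hsplit : Complex.exp (Complex.I * a - b) - 1 =
        (Complex.exp (Complex.I * a) - 1) * Complex.exp (-(b:ℂ)) + (Complex.exp (-(b:ℂ)) - 1) := by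
      rw [sub_eq_add_neg (Complex.I * (a:ℂ)) (b:ℂ), Complex.exp_add]
      ring
    rw [hsplit]
    have h2 : ‖Complex.exp (-(b:ℂ)) - 1‖ ≤ b := by
      rw [← Complex.ofReal_neg, ← Complex.ofReal_exp, ← Complex.ofReal_one,
        ← Complex.ofReal_sub, Complex.norm_real, Real.norm_eq_abs,
        abs_of_nonpos (by linarith), neg_sub]
      linarith [Real.add_one_le_exp (-b)]
    calc ‖(Complex.exp (Complex.I * a) - 1) * Complex.exp (-(b:ℂ)) + (Complex.exp (-(b:ℂ)) - 1)‖
        ≤ ‖Complex.exp (Complex.I * a) - 1‖ * ‖Complex.exp (-(b:ℂ))‖ +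
          ‖Complex.exp (-(b:ℂ)) - 1‖ := by
          refine (norm_add_le _ _).trans ?_
          rw [norm_mul]
      _ ≤ |a| * 1 + b := by
          gcongr
          · exact kib_norm_exp_I_mul_sub_one a
          · rw [hnorm_eb]; exact hexpb
      _ = |a| + b := by ring

private lemma kib_inner_small {β : ℝ} (hβ : β ∈ Ioo (0:ℝ) 1) {z₁ : ℝ} (h0 : z₁ ≠ 0)
    (h1 : |z₁| ≤ 1) :
    ∫⁻ z₂ in Ioi (0:ℝ), ENNReal.ofReal (min 4 (z₁ ^ 2 + z₂ ^ 2) / (z₁ ^ 2 + z₂ ^ 2) ^ (1 + β))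
      ≤ ENNReal.ofReal (|z₁| ^ (-β)) * ENNReal.ofReal ((1 - β)⁻¹) +
        ENNReal.ofReal (4 * (1 + 2 * β)⁻¹) := by
  obtain ⟨hβ0, hβ1⟩ := hβ
  rw [← Ioc_union_Ioi_eq_Ioi (zero_le_one' ℝ),
    lintegral_union measurableSet_Ioi Ioc_disjoint_Ioi_same]
  refine add_le_add ?_ ?_
  · calc ∫⁻ z₂ in Ioc (0:ℝ) 1,
        ENNReal.ofReal (min 4 (z₁ ^ 2 + z₂ ^ 2) / (z₁ ^ 2 + z₂ ^ 2) ^ (1 + β))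
        ≤ ∫⁻ z₂ in Ioc (0:ℝ) 1, ENNReal.ofReal (|z₁| ^ (-β) * z₂ ^ (-β)) := by
          refine setLIntegral_mono_ae' measurableSet_Ioc (ae_of_all _ fun z₂ hz₂ => ?_)
          refine ENNReal.ofReal_le_ofReal ?_
          have hz2 : 0 < z₂ := hz₂.1
          have hS : 0 < z₁ ^ 2 + z₂ ^ 2 := by positivity
          have hab : |z₁| * z₂ ≤ z₁ ^ 2 + z₂ ^ 2 := by
            nlinarith [sq_abs z₁, abs_nonneg z₁, sq_nonneg (|z₁| - z₂)]
          have habpos : 0 < |z₁| * z₂ := mul_pos (abs_pos.2 h0) hz2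
          calc min 4 (z₁ ^ 2 + z₂ ^ 2) / (z₁ ^ 2 + z₂ ^ 2) ^ (1 + β)
              ≤ (z₁ ^ 2 + z₂ ^ 2) / (z₁ ^ 2 + z₂ ^ 2) ^ (1 + β) := by
                gcongr
                exact min_le_right _ _
            _ = (z₁ ^ 2 + z₂ ^ 2) ^ (-β) := by
                rw [Real.rpow_add hS, Real.rpow_one, Real.rpow_neg hS.le,
                  div_mul_eq_div_div, div_self hS.ne', one_div]
            _ ≤ (|z₁| * z₂) ^ (-β) :=
                Real.rpow_le_rpow_of_nonpos habpos hab (by linarith)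
            _ = |z₁| ^ (-β) * z₂ ^ (-β) := Real.mul_rpow (abs_nonneg z₁) hz2.le
      _ = ENNReal.ofReal (|z₁| ^ (-β)) * ENNReal.ofReal ((1 - β)⁻¹) := by
          have hnn : 0 ≤ |z₁| ^ (-β) := Real.rpow_nonneg (abs_nonneg z₁) _
          simp_rw [ENNReal.ofReal_mul hnn]
          rw [lintegral_const_mul' _ _ ENNReal.ofReal_ne_top,
            kib_lint_Ioc_rpow (by linarith : (-1:ℝ) < -β)]
          congr 2
          ring
  · calc ∫⁻ z₂ in Ioi (1:ℝ),
        ENNReal.ofReal (min 4 (z₁ ^ 2 + z₂ ^ 2) / (z₁ ^ 2 + z₂ ^ 2) ^ (1 + β))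
        ≤ ∫⁻ z₂ in Ioi (1:ℝ), ENNReal.ofReal (4 * z₂ ^ (-(2 * (1 + β)))) := by
          refine setLIntegral_mono_ae' measurableSet_Ioi (ae_of_all _ fun z₂ hz₂ => ?_)
          refine ENNReal.ofReal_le_ofReal ?_
          have hz2 : (1:ℝ) < z₂ := hz₂
          have hz2' : (0:ℝ) < z₂ := by linarith
          have hS : 0 < z₁ ^ 2 + z₂ ^ 2 := by positivity
          have hsq : (z₂ ^ 2 : ℝ) ^ (1 + β) = z₂ ^ (2 * (1 + β)) := by
            rw [← Real.rpow_natCast z₂ 2, ← Real.rpow_mul hz2'.le]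
            norm_num
          calc min 4 (z₁ ^ 2 + z₂ ^ 2) / (z₁ ^ 2 + z₂ ^ 2) ^ (1 + β)
              ≤ 4 / (z₂ ^ 2 : ℝ) ^ (1 + β) := by
                apply div_le_div₀ (by norm_num) (min_le_left _ _)
                · positivity
                · exact Real.rpow_le_rpow (by positivity) (by nlinarith [sq_nonneg z₁])
                    (by linarith)
            _ = 4 * z₂ ^ (-(2 * (1 + β))) := by
                rw [hsq, Real.rpow_neg hz2'.le, div_eq_mul_inv]
      _ = ENNReal.ofReal (4 * (1 + 2 * β)⁻¹) := by
          simp_rw [ENNReal.ofReal_mul (by norm_num : (0:ℝ) ≤ 4)]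
          rw [lintegral_const_mul' _ _ ENNReal.ofReal_ne_top,
            kib_lint_Ioi_rpow (by linarith : -(2 * (1 + β)) < -1)]
          rw [show -(2 * (1 + β)) + 1 = -(1 + 2 * β) by ring, inv_neg, neg_neg,
            ← ENNReal.ofReal_mul (by norm_num : (0:ℝ) ≤ 4)]

private lemma kib_inner_big {β : ℝ} (hβ : β ∈ Ioo (0:ℝ) 1) {z₁ : ℝ} (h1 : 1 ≤ |z₁|) :
    ∫⁻ z₂ in Ioi (0:ℝ), ENNReal.ofReal (min 4 (z₁ ^ 2 + z₂ ^ 2) / (z₁ ^ 2 + z₂ ^ 2) ^ (1 + β))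
      ≤ ENNReal.ofReal ((4 + 4 * β⁻¹) * |z₁| ^ (-(1 + β))) := by
  obtain ⟨hβ0, hβ1⟩ := hβ
  have hz1 : (0:ℝ) < |z₁| := lt_of_lt_of_le one_pos h1
  have h0 : z₁ ≠ 0 := by
    intro h; rw [h, abs_zero] at h1; linarith
  rw [← Ioc_union_Ioi_eq_Ioi (zero_le_one' ℝ),
    lintegral_union measurableSet_Ioi Ioc_disjoint_Ioi_same]
  have hbig : ENNReal.ofReal ((4 + 4 * β⁻¹) * |z₁| ^ (-(1 + β))) =
      ENNReal.ofReal (4 * |z₁| ^ (-(1 + β))) +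
      ENNReal.ofReal ((4 * β⁻¹) * |z₁| ^ (-(1 + β))) := by
    rw [← ENNReal.ofReal_add (by positivity) (by positivity)]
    congr 1
    ring
  rw [hbig]
  refine add_le_add ?_ ?_
  · calc ∫⁻ z₂ in Ioc (0:ℝ) 1,
        ENNReal.ofReal (min 4 (z₁ ^ 2 + z₂ ^ 2) / (z₁ ^ 2 + z₂ ^ 2) ^ (1 + β))
        ≤ ∫⁻ _ in Ioc (0:ℝ) 1, ENNReal.ofReal (4 * |z₁| ^ (-(1 + β))) := by
          refine setLIntegral_mono_ae' measurableSet_Ioc (ae_of_all _ fun z₂ hz₂ => ?_)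
          refine ENNReal.ofReal_le_ofReal ?_
          have hz2 : 0 < z₂ := hz₂.1
          have hS : 0 < z₁ ^ 2 + z₂ ^ 2 := by positivity
          have h2 : (z₁ ^ 2 : ℝ) ^ (1 + β) = |z₁| ^ (2 * (1 + β)) := by
            rw [← sq_abs, ← Real.rpow_natCast |z₁| 2, ← Real.rpow_mul hz1.le]
            norm_num
          calc min 4 (z₁ ^ 2 + z₂ ^ 2) / (z₁ ^ 2 + z₂ ^ 2) ^ (1 + β)
              ≤ 4 / |z₁| ^ (1 + β) := by
                apply div_le_div₀ (by norm_num) (min_le_left _ _) (by positivity)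
                calc |z₁| ^ (1 + β) ≤ |z₁| ^ (2 * (1 + β)) :=
                      Real.rpow_le_rpow_of_exponent_le h1 (by linarith)
                  _ = (z₁ ^ 2 : ℝ) ^ (1 + β) := h2.symm
                  _ ≤ (z₁ ^ 2 + z₂ ^ 2) ^ (1 + β) :=
                      Real.rpow_le_rpow (by positivity) (by nlinarith [sq_nonneg z₂])
                        (by linarith)
            _ = 4 * |z₁| ^ (-(1 + β)) := by rw [Real.rpow_neg hz1.le, div_eq_mul_inv]
      _ = ENNReal.ofReal (4 * |z₁| ^ (-(1 + β))) := by
          rw [setLIntegral_const]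
          simp [Real.volume_Ioc]
  · calc ∫⁻ z₂ in Ioi (1:ℝ),
        ENNReal.ofReal (min 4 (z₁ ^ 2 + z₂ ^ 2) / (z₁ ^ 2 + z₂ ^ 2) ^ (1 + β))
        ≤ ∫⁻ z₂ in Ioi (1:ℝ), ENNReal.ofReal ((4 * |z₁| ^ (-(1 + β))) * z₂ ^ (-(1 + β))) := by
          refine setLIntegral_mono_ae' measurableSet_Ioi (ae_of_all _ fun z₂ hz₂ => ?_)
          refine ENNReal.ofReal_le_ofReal ?_
          have hz2 : (1:ℝ) < z₂ := hz₂
          have hz2' : (0:ℝ) < z₂ := by linarith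
          have hS : 0 < z₁ ^ 2 + z₂ ^ 2 := by positivity
          have hab : |z₁| * z₂ ≤ z₁ ^ 2 + z₂ ^ 2 := by
            nlinarith [sq_abs z₁, abs_nonneg z₁, sq_nonneg (|z₁| - z₂)]
          have habpos : 0 < |z₁| * z₂ := mul_pos hz1 hz2'
          calc min 4 (z₁ ^ 2 + z₂ ^ 2) / (z₁ ^ 2 + z₂ ^ 2) ^ (1 + β)
              ≤ 4 / (|z₁| * z₂) ^ (1 + β) := by
                apply div_le_div₀ (by norm_num) (min_le_left _ _)
                · positivity
                · exact Real.rpow_le_rpow habpos.le hab (by linarith)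
            _ = (4 * |z₁| ^ (-(1 + β))) * z₂ ^ (-(1 + β)) := by
                rw [Real.mul_rpow hz1.le hz2'.le, Real.rpow_neg hz1.le, Real.rpow_neg hz2'.le,
                  div_eq_mul_inv, mul_inv]
                ring
      _ = ENNReal.ofReal ((4 * β⁻¹) * |z₁| ^ (-(1 + β))) := by
          simp_rw [ENNReal.ofReal_mul (by positivity : (0:ℝ) ≤ 4 * |z₁| ^ (-(1 + β)))]
          rw [lintegral_const_mul' _ _ ENNReal.ofReal_ne_top,
            kib_lint_Ioi_rpow (by linarith : -(1 + β) < -1),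
            show -(1 + β) + 1 = -β by ring, inv_neg, neg_neg,
            ← ENNReal.ofReal_mul (by positivity : (0:ℝ) ≤ 4 * |z₁| ^ (-(1 + β)))]
          congr 1
          ring

private lemma kib_lintegral_reflect (f : ℝ → ℝ≥0∞) (hf : Measurable f) :
    ∫⁻ x : ℝ, f (-x) = ∫⁻ x : ℝ, f x := by
  have h := kib_lintegral_comp_mul_left f hf (a := (-1:ℝ)) (by norm_num)
  simp only [abs_of_nonpos, inv_neg, inv_one, abs_neg, abs_one, ENNReal.ofReal_one, one_mul,
    neg_one_mul] at h
  exact h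

private lemma kib_reflect_even {f : ℝ → ℝ≥0∞} (hf : Measurable f) (heven : ∀ x, f (-x) = f x)
    {s t : Set ℝ} (hs : MeasurableSet s) (ht : MeasurableSet t) (hst : ∀ x, x ∈ s ↔ -x ∈ t) :
    ∫⁻ x in s, f x = ∫⁻ x in t, f x := by
  rw [← lintegral_indicator hs, ← lintegral_indicator ht]
  rw [← kib_lintegral_reflect (t.indicator f) (hf.indicator ht)]
  congr 1
  funext x
  by_cases hx : x ∈ s
  · rw [indicator_of_mem hx, indicator_of_mem ((hst x).1 hx), heven]
  · rw [indicator_of_notMem hx, indicator_of_notMem (fun h => hx ((hst x).2 h))]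

private lemma kib_meas_abs_rpow (c : ℝ) :
    Measurable (fun x : ℝ => ENNReal.ofReal (|x| ^ c)) := by fun_prop

private lemma kib_icc_abs_rpow {β : ℝ} (hβ : β ∈ Ioo (0:ℝ) 1) :
    ∫⁻ x in Icc (-1:ℝ) 1, ENNReal.ofReal (|x| ^ (-β)) =
      2 * ENNReal.ofReal ((1 - β)⁻¹) := by
  obtain ⟨hβ0, hβ1⟩ := hβ
  have hIoc : ∫⁻ x in Ioc (0:ℝ) 1, ENNReal.ofReal (|x| ^ (-β)) =
      ENNReal.ofReal ((1 - β)⁻¹) := by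
    rw [setLIntegral_congr_fun_ae measurableSet_Ioc
      (ae_of_all _ fun x hx => by rw [abs_of_pos hx.1]),
      kib_lint_Ioc_rpow (by linarith : (-1:ℝ) < -β)]
    congr 1
    ring
  rw [setLIntegral_congr (Ioc_ae_eq_Icc (μ := volume) (a := (-1:ℝ)) (b := 1)).symm,
    ← Ioc_union_Ioc_eq_Ioc (by norm_num : (-1:ℝ) ≤ 0) zero_le_one,
    lintegral_union measurableSet_Ioc (Ioc_disjoint_Ioc_of_le le_rfl)]
  have hneg : ∫⁻ x in Ioc (-1:ℝ) 0, ENNReal.ofReal (|x| ^ (-β)) =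
      ∫⁻ x in Ico (0:ℝ) 1, ENNReal.ofReal (|x| ^ (-β)) := by
    refine kib_reflect_even (kib_meas_abs_rpow _) (fun x => by rw [abs_neg])
      measurableSet_Ioc measurableSet_Ico fun x => ?_
    constructor
    · rintro ⟨h1, h2⟩; exact ⟨by linarith, by linarith⟩
    · rintro ⟨h1, h2⟩; exact ⟨by linarith, by linarith⟩
  rw [hneg, setLIntegral_congr (Ico_ae_eq_Ioc (μ := volume) (a := (0:ℝ)) (b := 1)), hIoc,
    two_mul]

private lemma kib_meas_abs_rpow' (c d : ℝ) :
    Measurable (fun x : ℝ => ENNReal.ofReal (c * |x| ^ d)) := by fun_prop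

private lemma kib_meas_pair (β : ℝ) :
    Measurable (fun p : ℝ × ℝ =>
      ENNReal.ofReal (min 4 (p.1 ^ 2 + p.2 ^ 2) / (p.1 ^ 2 + p.2 ^ 2) ^ (1 + β))) := by
  fun_prop

private lemma kib_J_bound {β : ℝ} (hβ : β ∈ Ioo (0:ℝ) 1) :
    ∫⁻ z₁ : ℝ, ∫⁻ z₂ in Ioi (0:ℝ),
        ENNReal.ofReal (min 4 (z₁ ^ 2 + z₂ ^ 2) / (z₁ ^ 2 + z₂ ^ 2) ^ (1 + β))
      ≤ (2 * ENNReal.ofReal ((1 - β)⁻¹)) * ENNReal.ofReal ((1 - β)⁻¹)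
        + ENNReal.ofReal (4 * (1 + 2 * β)⁻¹) * ENNReal.ofReal 2
        + 2 * ENNReal.ofReal ((4 + 4 * β⁻¹) * β⁻¹) := by
  obtain ⟨hβ0, hβ1⟩ := hβ
  set Ψ : ℝ → ℝ≥0∞ := fun z₁ => ∫⁻ z₂ in Ioi (0:ℝ),
    ENNReal.ofReal (min 4 (z₁ ^ 2 + z₂ ^ 2) / (z₁ ^ 2 + z₂ ^ 2) ^ (1 + β)) with hΨ
  have h0ae : ∀ᵐ x : ℝ ∂volume, x ≠ 0 := by
    have h : volume ({0} : Set ℝ) = 0 := measure_singleton 0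
    filter_upwards [measure_eq_zero_iff_ae_notMem.mp h] with x hx
    simpa using hx
  rw [← lintegral_add_compl Ψ (measurableSet_Icc (a := (-1:ℝ)) (b := 1))]
  refine add_le_add ?_ ?_
  · calc ∫⁻ z₁ in Icc (-1:ℝ) 1, Ψ z₁
        ≤ ∫⁻ z₁ in Icc (-1:ℝ) 1,
            (ENNReal.ofReal (|z₁| ^ (-β)) * ENNReal.ofReal ((1 - β)⁻¹)
              + ENNReal.ofReal (4 * (1 + 2 * β)⁻¹)) := by
          refine setLIntegral_mono_ae
            (((kib_meas_abs_rpow (-β)).mul_const _).add_const _).aemeasurable ?_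
          filter_upwards [h0ae] with z₁ hz₁ hmem
          exact kib_inner_small ⟨hβ0, hβ1⟩ hz₁ (abs_le.2 ⟨hmem.1, hmem.2⟩)
      _ = (2 * ENNReal.ofReal ((1 - β)⁻¹)) * ENNReal.ofReal ((1 - β)⁻¹)
            + ENNReal.ofReal (4 * (1 + 2 * β)⁻¹) * ENNReal.ofReal 2 := by
          rw [lintegral_add_left ((kib_meas_abs_rpow (-β)).mul_const _),
            lintegral_mul_const' _ _ ENNReal.ofReal_ne_top,
            kib_icc_abs_rpow ⟨hβ0, hβ1⟩, setLIntegral_const, Real.volume_Icc]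
          norm_num
  · have hcompl : (Icc (-1:ℝ) 1)ᶜ = Iio (-1) ∪ Ioi 1 := by
      ext x
      simp only [mem_compl_iff, mem_Icc, not_and_or, not_le, mem_union, mem_Iio, mem_Ioi]
    rw [hcompl, lintegral_union measurableSet_Ioi
      ((Iic_disjoint_Ioi (by norm_num : (-1:ℝ) ≤ 1)).mono Iio_subset_Iic_self le_rfl)]
    have hIoi : ∫⁻ z₁ in Ioi (1:ℝ), ENNReal.ofReal ((4 + 4 * β⁻¹) * |z₁| ^ (-(1 + β)))
        = ENNReal.ofReal ((4 + 4 * β⁻¹) * β⁻¹) := by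
      have hc : (0:ℝ) ≤ 4 + 4 * β⁻¹ := by positivity
      simp_rw [ENNReal.ofReal_mul hc]
      rw [lintegral_const_mul' _ _ ENNReal.ofReal_ne_top,
        setLIntegral_congr_fun_ae measurableSet_Ioi
          (ae_of_all _ fun x (hx : (1:ℝ) < x) => by rw [abs_of_pos (by linarith)]),
        kib_lint_Ioi_rpow (by linarith : -(1 + β) < -1),
        show -(1 + β) + 1 = -β by ring, inv_neg, neg_neg]
    have hIoibound : ∫⁻ z₁ in Ioi (1:ℝ), Ψ z₁
        ≤ ENNReal.ofReal ((4 + 4 * β⁻¹) * β⁻¹) := by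
      rw [← hIoi]
      refine setLIntegral_mono_ae
        (kib_meas_abs_rpow' (4 + 4 * β⁻¹) (-(1 + β))).aemeasurable ?_
      filter_upwards [] with z₁ hmem
      exact kib_inner_big ⟨hβ0, hβ1⟩ (by rw [abs_of_pos (by linarith [mem_Ioi.1 hmem] : (0:ℝ) < z₁)]; linarith [mem_Ioi.1 hmem])
    have hIiobound : ∫⁻ z₁ in Iio (-1:ℝ), Ψ z₁
        ≤ ENNReal.ofReal ((4 + 4 * β⁻¹) * β⁻¹) := by
      have hstep : ∫⁻ z₁ in Iio (-1:ℝ), Ψ z₁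
          ≤ ∫⁻ z₁ in Iio (-1:ℝ), ENNReal.ofReal ((4 + 4 * β⁻¹) * |z₁| ^ (-(1 + β))) := by
        refine setLIntegral_mono_ae
          (kib_meas_abs_rpow' (4 + 4 * β⁻¹) (-(1 + β))).aemeasurable ?_
        filter_upwards [] with z₁ hmem
        have : (1:ℝ) ≤ |z₁| := by
          rw [abs_of_neg (by linarith [mem_Iio.1 hmem] : z₁ < 0)]
          linarith [mem_Iio.1 hmem]
        exact kib_inner_big ⟨hβ0, hβ1⟩ this
      refine hstep.trans ?_
      rw [kib_reflect_even (kib_meas_abs_rpow' (4 + 4 * β⁻¹) (-(1 + β)))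
        (fun x => by rw [abs_neg]) measurableSet_Iio (measurableSet_Ioi (a := (1:ℝ)))
        (fun x => by
          simp only [mem_Iio, mem_Ioi]
          constructor <;> intro h <;> linarith),
        hIoi]
    calc (∫⁻ z₁ in Iio (-1:ℝ), Ψ z₁) + ∫⁻ z₁ in Ioi (1:ℝ), Ψ z₁
        ≤ ENNReal.ofReal ((4 + 4 * β⁻¹) * β⁻¹) + ENNReal.ofReal ((4 + 4 * β⁻¹) * β⁻¹) :=
          add_le_add hIiobound hIoibound
      _ = 2 * ENNReal.ofReal ((4 + 4 * β⁻¹) * β⁻¹) := (two_mul _).symm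

set_option maxHeartbeats 1000000 in
private lemma kib_scaling {β : ℝ} (hβ : β ∈ Ioo (0:ℝ) 1) {K2 : ℝ} (hK2 : 0 < K2) :
    ∫⁻ z₁ : ℝ, ∫⁻ z₂ in Ioi (0:ℝ),
        ENNReal.ofReal (min 4 (K2 * (z₁ ^ 2 + z₂ ^ 2)) / (z₁ ^ 2 + z₂ ^ 2) ^ (1 + β))
      = ENNReal.ofReal (K2 ^ β) *
        ∫⁻ z₁ : ℝ, ∫⁻ z₂ in Ioi (0:ℝ),
          ENNReal.ofReal (min 4 (z₁ ^ 2 + z₂ ^ 2) / (z₁ ^ 2 + z₂ ^ 2) ^ (1 + β)) := by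
  obtain ⟨hβ0, hβ1⟩ := hβ
  set K : ℝ := Real.sqrt K2 with hKdef
  have hK : 0 < K := Real.sqrt_pos.2 hK2
  have hKsq : K ^ 2 = K2 := Real.sq_sqrt hK2.le
  set Hf : ℝ → ℝ → ℝ≥0∞ := fun u w =>
    ENNReal.ofReal (min 4 (u ^ 2 + w ^ 2) / (u ^ 2 + w ^ 2) ^ (1 + β)) with hHf
  have hHfmeas : ∀ u, Measurable (Hf u) :=
    fun u => (kib_meas_pair β).comp (measurable_const.prodMk measurable_id)
  have hKpow : K ^ (2 + 2 * β) = K2 ^ (1 + β) := by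
    rw [hKdef, Real.sqrt_eq_rpow, ← Real.rpow_mul hK2.le]
    congr 1
    ring
  have hKpownn : (0:ℝ) ≤ K ^ (2 + 2 * β) := Real.rpow_nonneg hK.le _
  have hpt : ∀ z₁ z₂ : ℝ, min 4 (K2 * (z₁ ^ 2 + z₂ ^ 2)) / (z₁ ^ 2 + z₂ ^ 2) ^ (1 + β)
      = K ^ (2 + 2 * β) * (min 4 ((K * z₁) ^ 2 + (K * z₂) ^ 2) /
          ((K * z₁) ^ 2 + (K * z₂) ^ 2) ^ (1 + β)) := by
    intro z₁ z₂
    have hS0 : (0:ℝ) ≤ z₁ ^ 2 + z₂ ^ 2 := by positivity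
    have hKS : (K * z₁) ^ 2 + (K * z₂) ^ 2 = K2 * (z₁ ^ 2 + z₂ ^ 2) := by
      rw [mul_pow, mul_pow, ← hKsq]; ring
    rcases eq_or_lt_of_le hS0 with h | hS
    · have hz1 : z₁ = 0 := by nlinarith [sq_nonneg z₁, sq_nonneg z₂]
      have hz2 : z₂ = 0 := by nlinarith [sq_nonneg z₁, sq_nonneg z₂]
      rw [hz1, hz2]
      norm_num
    · rw [hKS, Real.mul_rpow hK2.le hS0, hKpow]
      have hne : K2 ^ (1 + β) ≠ 0 := (Real.rpow_pos_of_pos hK2 _).ne'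
      field_simp
  have hinner : ∀ u : ℝ, ∫⁻ z₂ in Ioi (0:ℝ), Hf u (K * z₂)
      = ENNReal.ofReal K⁻¹ * ∫⁻ w in Ioi (0:ℝ), Hf u w := by
    intro u
    rw [← lintegral_indicator measurableSet_Ioi, ← lintegral_indicator measurableSet_Ioi]
    have hind : ∀ z₂ : ℝ, (Ioi (0:ℝ)).indicator (fun z₂ => Hf u (K * z₂)) z₂
        = (Ioi (0:ℝ)).indicator (Hf u) (K * z₂) := by
      intro z₂
      by_cases h : z₂ ∈ Ioi (0:ℝ)
      · rw [indicator_of_mem h, indicator_of_mem (show K * z₂ ∈ Ioi (0:ℝ) from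
          mul_pos hK (mem_Ioi.1 h))]
      · rw [indicator_of_notMem h, indicator_of_notMem (fun hh => h (mem_Ioi.2
          ((mul_pos_iff_of_pos_left hK).1 (mem_Ioi.1 hh))))]
    simp_rw [hind]
    rw [kib_lintegral_comp_mul_left ((Ioi (0:ℝ)).indicator (Hf u))
      ((hHfmeas u).indicator measurableSet_Ioi) hK.ne', abs_of_pos (inv_pos.2 hK)]
  have hΨmeas : Measurable (fun u : ℝ => ∫⁻ w in Ioi (0:ℝ), Hf u w) :=
    Measurable.lintegral_prod_right (kib_meas_pair β)
  calc ∫⁻ z₁ : ℝ, ∫⁻ z₂ in Ioi (0:ℝ),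
      ENNReal.ofReal (min 4 (K2 * (z₁ ^ 2 + z₂ ^ 2)) / (z₁ ^ 2 + z₂ ^ 2) ^ (1 + β))
      = ∫⁻ z₁ : ℝ, ∫⁻ z₂ in Ioi (0:ℝ),
          ENNReal.ofReal (K ^ (2 + 2 * β)) * Hf (K * z₁) (K * z₂) := by
        simp_rw [hpt, ENNReal.ofReal_mul hKpownn]
        rfl
    _ = ∫⁻ z₁ : ℝ, ENNReal.ofReal (K ^ (2 + 2 * β)) *
          (ENNReal.ofReal K⁻¹ * ∫⁻ w in Ioi (0:ℝ), Hf (K * z₁) w) := by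
        congr 1
        funext z₁
        rw [lintegral_const_mul' _ _ ENNReal.ofReal_ne_top, hinner (K * z₁)]
    _ = ENNReal.ofReal (K ^ (2 + 2 * β)) * (ENNReal.ofReal K⁻¹ *
          ∫⁻ z₁ : ℝ, (fun u => ∫⁻ w in Ioi (0:ℝ), Hf u w) (K * z₁)) := by
        rw [lintegral_const_mul' _ _ ENNReal.ofReal_ne_top,
          lintegral_const_mul' _ _ ENNReal.ofReal_ne_top]
    _ = ENNReal.ofReal (K ^ (2 + 2 * β)) * (ENNReal.ofReal K⁻¹ * (ENNReal.ofReal K⁻¹ *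
          ∫⁻ u : ℝ, ∫⁻ w in Ioi (0:ℝ), Hf u w)) := by
        rw [kib_lintegral_comp_mul_left (fun u => ∫⁻ w in Ioi (0:ℝ), Hf u w) hΨmeas hK.ne',
          abs_of_pos (inv_pos.2 hK)]
    _ = ENNReal.ofReal (K2 ^ β) *
          ∫⁻ z₁ : ℝ, ∫⁻ z₂ in Ioi (0:ℝ),
            ENNReal.ofReal (min 4 (z₁ ^ 2 + z₂ ^ 2) / (z₁ ^ 2 + z₂ ^ 2) ^ (1 + β)) := by
        rw [← mul_assoc, ← mul_assoc, ← ENNReal.ofReal_mul hKpownn,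
          ← ENNReal.ofReal_mul (by positivity)]
        congr 2
        rw [hKpow, hKdef, Real.sqrt_eq_rpow, ← Real.rpow_neg_one (K2 ^ (1/2 : ℝ)),
          ← Real.rpow_mul hK2.le, ← Real.rpow_add hK2, ← Real.rpow_add hK2]
        congr 1
        ring


/-- **Kernel integral bound.**
For `β ∈ (0,1)` there is a constant `c_β > 0` such that for all `k₁ ∈ ℝ` and `k₂ > 0`,
`I(k₁,k₂,β) = ∫_{z₁∈ℝ} ∫_{z₂>0} |e^{i k₁ z₁ - k₂ z₂} - 1|² / (z₁²+z₂²)^{1+β} dz₂ dz₁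
  ≤ c_β (k₁² + k₂²)^β`. -/
theorem kernel_integral_bound (β : ℝ) (hβ : β ∈ Ioo (0:ℝ) 1) :
    ∃ c : ℝ, 0 < c ∧ ∀ k₁ : ℝ, ∀ k₂ : ℝ, 0 < k₂ →
      (∫ z₁ : ℝ, ∫ z₂ in Ioi (0:ℝ),
          ‖Complex.exp (Complex.I * (k₁:ℂ) * (z₁:ℂ) - (k₂:ℂ) * (z₂:ℂ)) - 1‖ ^ 2 /
            (z₁ ^ 2 + z₂ ^ 2) ^ (1 + β))
        ≤ c * (k₁ ^ 2 + k₂ ^ 2) ^ β := by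

  obtain ⟨hβ0, hβ1⟩ := hβ
  set Creal : ℝ := (2 * (1 - β)⁻¹) * (1 - β)⁻¹ + (4 * (1 + 2 * β)⁻¹) * 2 +
    2 * ((4 + 4 * β⁻¹) * β⁻¹) with hCreal
  have hCreal_nonneg : 0 ≤ Creal := by
    have h1 : (0:ℝ) < 1 - β := by linarith
    positivity
  have hJle : ∫⁻ z₁ : ℝ, ∫⁻ z₂ in Ioi (0:ℝ),
      ENNReal.ofReal (min 4 (z₁ ^ 2 + z₂ ^ 2) / (z₁ ^ 2 + z₂ ^ 2) ^ (1 + β))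
      ≤ ENNReal.ofReal Creal := by
    refine (kib_J_bound ⟨hβ0, hβ1⟩).trans (le_of_eq ?_)
    have h1 : (0:ℝ) ≤ (1 - β)⁻¹ := by
      have : (0:ℝ) < 1 - β := by linarith
      positivity
    rw [show (2:ℝ≥0∞) = ENNReal.ofReal 2 from (ENNReal.ofReal_ofNat 2).symm,
      ← ENNReal.ofReal_mul (by norm_num), ← ENNReal.ofReal_mul (by positivity),
      ← ENNReal.ofReal_mul (by positivity), ← ENNReal.ofReal_mul (by norm_num),
      ← ENNReal.ofReal_add (by positivity) (by positivity),
      ← ENNReal.ofReal_add (by positivity) (by positivity)]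
  refine ⟨2 * Creal + 1, by positivity, fun k₁ k₂ hk₂ => ?_⟩
  set K2 : ℝ := k₁ ^ 2 + k₂ ^ 2 with hK2def
  have hK2 : 0 < K2 := by positivity
  set g : ℝ → ℝ → ℝ := fun z₁ z₂ =>
    ‖Complex.exp (Complex.I * (k₁:ℂ) * (z₁:ℂ) - (k₂:ℂ) * (z₂:ℂ)) - 1‖ ^ 2 /
      (z₁ ^ 2 + z₂ ^ 2) ^ (1 + β) with hg
  have hgm : Measurable (Function.uncurry g) := by
    apply Measurable.div
    · fun_prop
    · fun_prop
  have hg_nonneg : ∀ z₁ z₂, 0 ≤ g z₁ z₂ := by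
    intro z₁ z₂
    have : (0:ℝ) ≤ (z₁ ^ 2 + z₂ ^ 2) ^ (1 + β) := Real.rpow_nonneg (by positivity) _
    positivity
  -- pointwise bound
  have hptw : ∀ z₁ z₂ : ℝ, 0 < z₂ → g z₁ z₂ ≤
      2 * (min 4 (K2 * (z₁ ^ 2 + z₂ ^ 2)) / (z₁ ^ 2 + z₂ ^ 2) ^ (1 + β)) := by
    intro z₁ z₂ hz₂
    have hS : (0:ℝ) < z₁ ^ 2 + z₂ ^ 2 := by positivity
    have harg : Complex.I * (k₁:ℂ) * (z₁:ℂ) - (k₂:ℂ) * (z₂:ℂ) =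
        Complex.I * ((k₁ * z₁ : ℝ):ℂ) - ((k₂ * z₂ : ℝ):ℂ) := by push_cast; ring
    have hb : (0:ℝ) ≤ k₂ * z₂ := by positivity
    have hnorm : ‖Complex.exp (Complex.I * (k₁:ℂ) * (z₁:ℂ) - (k₂:ℂ) * (z₂:ℂ)) - 1‖ ≤
        min 2 (|k₁ * z₁| + k₂ * z₂) := by
      rw [harg]; exact kib_norm_exp_le (k₁ * z₁) (k₂ * z₂) hb
    have hm0 : (0:ℝ) ≤ min 2 (|k₁ * z₁| + k₂ * z₂) := le_min (by norm_num) (by positivity)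
    have h1 : ‖Complex.exp (Complex.I * (k₁:ℂ) * (z₁:ℂ) - (k₂:ℂ) * (z₂:ℂ)) - 1‖ ^ 2 ≤
        min 4 (2 * (K2 * (z₁ ^ 2 + z₂ ^ 2))) := by
      have hsq' : ‖Complex.exp (Complex.I * (k₁:ℂ) * (z₁:ℂ) - (k₂:ℂ) * (z₂:ℂ)) - 1‖ ^ 2 ≤
          (min 2 (|k₁ * z₁| + k₂ * z₂)) ^ 2 :=
        pow_le_pow_left₀ (norm_nonneg _) hnorm 2
      refine hsq'.trans (le_min ?_ ?_)
      · calc (min 2 (|k₁ * z₁| + k₂ * z₂)) ^ 2 ≤ 2 ^ 2 :=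
            pow_le_pow_left₀ hm0 (min_le_left _ _) 2
          _ = 4 := by norm_num
      · calc (min 2 (|k₁ * z₁| + k₂ * z₂)) ^ 2 ≤ (|k₁ * z₁| + k₂ * z₂) ^ 2 :=
            pow_le_pow_left₀ hm0 (min_le_right _ _) 2
          _ ≤ 2 * ((k₁ * z₁) ^ 2 + (k₂ * z₂) ^ 2) := by
            nlinarith [sq_abs (k₁ * z₁), sq_nonneg (|k₁ * z₁| - k₂ * z₂)]
          _ ≤ 2 * (K2 * (z₁ ^ 2 + z₂ ^ 2)) := by
            have : (k₁ * z₁) ^ 2 + (k₂ * z₂) ^ 2 ≤ K2 * (z₁ ^ 2 + z₂ ^ 2) := by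
              rw [hK2def]
              nlinarith [sq_nonneg (k₁ * z₂), sq_nonneg (k₂ * z₁)]
            linarith
    have h2 : min 4 (2 * (K2 * (z₁ ^ 2 + z₂ ^ 2))) ≤
        2 * min 4 (K2 * (z₁ ^ 2 + z₂ ^ 2)) := by
      rcases le_total (K2 * (z₁ ^ 2 + z₂ ^ 2)) 4 with h | h
      · rw [min_eq_right h]; exact min_le_right _ _
      · rw [min_eq_left h]
        calc min 4 (2 * (K2 * (z₁ ^ 2 + z₂ ^ 2))) ≤ 4 := min_le_left _ _
          _ ≤ 2 * 4 := by norm_num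
    show ‖Complex.exp (Complex.I * (k₁:ℂ) * (z₁:ℂ) - (k₂:ℂ) * (z₂:ℂ)) - 1‖ ^ 2 /
      (z₁ ^ 2 + z₂ ^ 2) ^ (1 + β) ≤ _
    rw [← mul_div_assoc]
    refine div_le_div₀ ?_ (h1.trans h2) (Real.rpow_pos_of_pos hS _) le_rfl
    have hmin0 : (0:ℝ) ≤ min 4 (K2 * (z₁ ^ 2 + z₂ ^ 2)) := le_min (by norm_num) (by positivity)
    linarith
  -- pass to lintegrals
  set F : ℝ → ℝ := fun z₁ => ∫ z₂ in Ioi (0:ℝ), g z₁ z₂ with hF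
  have hF_nonneg : ∀ z₁, 0 ≤ F z₁ := fun z₁ => integral_nonneg (fun z₂ => hg_nonneg z₁ z₂)
  have hF_asm : AEStronglyMeasurable F volume :=
    (hgm.stronglyMeasurable.integral_prod_right).aestronglyMeasurable
  have hmain : (∫ z₁ : ℝ, F z₁) ≤ (2 * Creal + 1) * K2 ^ β := by
    rw [integral_eq_lintegral_of_nonneg_ae (ae_of_all _ hF_nonneg) hF_asm]
    refine ENNReal.toReal_le_of_le_ofReal (by positivity) ?_
    calc ∫⁻ z₁ : ℝ, ENNReal.ofReal (F z₁)
        ≤ ∫⁻ z₁ : ℝ, ∫⁻ z₂ in Ioi (0:ℝ), ENNReal.ofReal (g z₁ z₂) := by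
          refine lintegral_mono fun z₁ => ?_
          rw [show F z₁ = ∫ z₂ in Ioi (0:ℝ), g z₁ z₂ from rfl,
            integral_eq_lintegral_of_nonneg_ae (ae_of_all _ (hg_nonneg z₁))
            (hgm.of_uncurry_left.aestronglyMeasurable)]
          exact ENNReal.ofReal_toReal_le
      _ ≤ ∫⁻ z₁ : ℝ, ∫⁻ z₂ in Ioi (0:ℝ), 2 *
            ENNReal.ofReal (min 4 (K2 * (z₁ ^ 2 + z₂ ^ 2)) / (z₁ ^ 2 + z₂ ^ 2) ^ (1 + β)) := by
          refine lintegral_mono fun z₁ => ?_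
          refine setLIntegral_mono_ae' measurableSet_Ioi (ae_of_all _ fun z₂ hz₂ => ?_)
          rw [show (2:ℝ≥0∞) = ENNReal.ofReal 2 from (ENNReal.ofReal_ofNat 2).symm,
            ← ENNReal.ofReal_mul (by norm_num)]
          exact ENNReal.ofReal_le_ofReal (hptw z₁ z₂ (mem_Ioi.1 hz₂))
      _ = 2 * ∫⁻ z₁ : ℝ, ∫⁻ z₂ in Ioi (0:ℝ),
            ENNReal.ofReal (min 4 (K2 * (z₁ ^ 2 + z₂ ^ 2)) / (z₁ ^ 2 + z₂ ^ 2) ^ (1 + β)) := by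
          simp_rw [lintegral_const_mul' (2:ℝ≥0∞) _ (by norm_num : (2:ℝ≥0∞) ≠ ⊤)]
      _ = 2 * (ENNReal.ofReal (K2 ^ β) *
            ∫⁻ z₁ : ℝ, ∫⁻ z₂ in Ioi (0:ℝ),
              ENNReal.ofReal (min 4 (z₁ ^ 2 + z₂ ^ 2) / (z₁ ^ 2 + z₂ ^ 2) ^ (1 + β))) := by
          rw [kib_scaling ⟨hβ0, hβ1⟩ hK2]
      _ ≤ 2 * (ENNReal.ofReal (K2 ^ β) * ENNReal.ofReal Creal) := by
          gcongr
      _ ≤ ENNReal.ofReal ((2 * Creal + 1) * K2 ^ β) := by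
          rw [show (2:ℝ≥0∞) = ENNReal.ofReal 2 from (ENNReal.ofReal_ofNat 2).symm,
            ← ENNReal.ofReal_mul (Real.rpow_nonneg hK2.le _),
            ← ENNReal.ofReal_mul (by norm_num)]
          refine ENNReal.ofReal_le_ofReal ?_
          have hKb : (0:ℝ) ≤ K2 ^ β := Real.rpow_nonneg hK2.le _
          nlinarith
  exact hmain
end

section
/- Scaling identity and finiteness of the polar integral: For $\beta\in(0,1)$ and $\lambda\in[0,1]$, the integral $J_1(\lambda,\beta)=\int_{\theta=0}^\pi\int_{r=0}^\infty\frac{|e^{(i\cos\theta-\lambda\sin\theta)r}-1|^2}{r^{1+2\beta}}\,dr\,d\theta$ is finite. Moreover, for every $k_1>0$, $\int_{z_1\in\mathbb{R}}\int_{z_2=0}^\infty\frac{|e^{ik_1z_1-\lambda k_1z_2}-1|^2}{(z_1^2+z_2^2)^{1+\beta}}\,dz_2\,dz_1=(k_1^2)^{\beta}\,J_1(\lambda,\beta)$ (for $\lambda\in(0,1]$). -/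
open MeasureTheory Set Real

private lemma norm_exp_sub_one_sq_le {w : ℂ} (hw : w.re ≤ 0) :
    ‖Complex.exp w - 1‖ ^ 2 ≤ 4 * min 1 (‖w‖ ^ 2) := by
  rcases le_or_gt ‖w‖ 1 with h | h
  · have h1 : ‖Complex.exp w - 1‖ ≤ 2 * ‖w‖ := by
      exact Complex.norm_exp_sub_one_le h
    have : min 1 (‖w‖^2) = ‖w‖^2 := min_eq_right (by nlinarith [norm_nonneg w])
    rw [this]
    nlinarith [norm_nonneg (Complex.exp w - 1), norm_nonneg w]
  · have h1 : ‖Complex.exp w - 1‖ ≤ 2 := by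
      calc ‖Complex.exp w - 1‖ ≤ ‖Complex.exp w‖ + ‖(1:ℂ)‖ := norm_sub_le _ _
      _ ≤ 1 + 1 := by
          rw [Complex.norm_exp]
          gcongr
          · exact Real.exp_le_one_iff.mpr hw
          · simp
      _ = 2 := by norm_num
    have : min 1 (‖w‖^2) = 1 := min_eq_left (by nlinarith)
    rw [this]
    nlinarith [norm_nonneg (Complex.exp w - 1)]

private lemma dominating_integrable {β : ℝ} (hβ : β ∈ Ioo (0:ℝ) 1) :
    IntegrableOn (fun r : ℝ => min 1 (r ^ 2) / r ^ (1 + 2*β)) (Ioi (0:ℝ)) := by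
  have hmeas : Measurable (fun r : ℝ => min 1 (r ^ 2) / r ^ (1 + 2*β)) :=
    (measurable_const.min (measurable_id.pow_const 2)).div ((measurable_id'.pow_const _))
  have h1 : IntegrableOn (fun r : ℝ => min 1 (r ^ 2) / r ^ (1 + 2*β)) (Ioc (0:ℝ) 1) := by
    have hint : IntegrableOn (fun r : ℝ => r ^ (1 - 2*β)) (Ioc (0:ℝ) 1) := by
      have := intervalIntegral.intervalIntegrable_rpow' (a := 0) (b := 1) (r := 1 - 2*β) (by linarith [hβ.2])
      rwa [intervalIntegrable_iff_integrableOn_Ioc_of_le zero_le_one] at this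
    refine hint.mono' hmeas.aestronglyMeasurable ?_
    filter_upwards [ae_restrict_mem measurableSet_Ioc] with r hr
    have hr0 : (0:ℝ) < r := hr.1
    have hd : (0:ℝ) < r ^ (1 + 2*β) := Real.rpow_pos_of_pos hr0 _
    rw [Real.norm_eq_abs, abs_of_nonneg (by positivity)]
    calc min 1 (r^2) / r ^ (1+2*β) ≤ r^2 / r ^ (1+2*β) := by
          gcongr; exact min_le_right _ _
      _ = r ^ (1 - 2*β) := by
          rw [← Real.rpow_natCast r 2, ← Real.rpow_sub hr0]
          · congr 1; ring
  have h2 : IntegrableOn (fun r : ℝ => min 1 (r ^ 2) / r ^ (1 + 2*β)) (Ioi (1:ℝ)) := by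
    have hint : IntegrableOn (fun r : ℝ => r ^ (-(1 + 2*β))) (Ioi (1:ℝ)) :=
      (integrableOn_Ioi_rpow_iff one_pos).mpr (by linarith [hβ.1])
    refine hint.mono' hmeas.aestronglyMeasurable ?_
    filter_upwards [ae_restrict_mem measurableSet_Ioi] with r hr
    have hr0 : (0:ℝ) < r := lt_trans one_pos hr
    have hd : (0:ℝ) < r ^ (1 + 2*β) := Real.rpow_pos_of_pos hr0 _
    rw [Real.norm_eq_abs, abs_of_nonneg (by positivity)]
    calc min 1 (r^2) / r ^ (1+2*β) ≤ 1 / r ^ (1+2*β) := by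
          gcongr; exact min_le_left _ _
      _ = r ^ (-(1 + 2*β)) := by rw [Real.rpow_neg hr0.le, one_div]
  have : Ioc (0:ℝ) 1 ∪ Ioi 1 = Ioi 0 := Ioc_union_Ioi_eq_Ioi zero_le_one
  rw [← this]
  exact h1.union h2

private lemma polar_integrand_integrable {β l : ℝ} (hβ : β ∈ Ioo (0:ℝ) 1)
    (hl : l ∈ Icc (0:ℝ) 1) {k : ℝ} (hk : 0 < k) :
    IntegrableOn
      (fun p : ℝ × ℝ =>
        ‖Complex.exp ((Complex.I * Real.cos p.1 - (l:ℂ) * Real.sin p.1) * ((k:ℂ) * (p.2:ℂ))) - 1‖ ^ 2 /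
          p.2 ^ (1 + 2*β))
      (Ioo (0:ℝ) Real.pi ×ˢ Ioi (0:ℝ)) := by
  have hmeasS : MeasurableSet (Ioo (0:ℝ) Real.pi ×ˢ Ioi (0:ℝ)) :=
    measurableSet_Ioo.prod measurableSet_Ioi
  set C : ℝ := 4 * (4 * k^2 + 1) with hC
  have hC0 : 0 ≤ C := by positivity
  -- dominating function
  have hdom : IntegrableOn (fun p : ℝ × ℝ => C * (min 1 (p.2 ^ 2) / p.2 ^ (1 + 2*β)))
      (Ioo (0:ℝ) Real.pi ×ˢ Ioi (0:ℝ)) := by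
    have h1 : Integrable (fun _ : ℝ => C) (volume.restrict (Ioo (0:ℝ) Real.pi)) :=
      integrableOn_const measure_Ioo_lt_top.ne
    have h2 := dominating_integrable hβ
    have := h1.mul_prod h2
    rwa [IntegrableOn, Measure.volume_eq_prod, ← Measure.prod_restrict]
  refine hdom.mono' ?_ ?_
  · -- a.e. strong measurability
    apply ContinuousOn.aestronglyMeasurable ?_ hmeasS
    apply ContinuousOn.div
    · fun_prop
    · exact fun p hp => (Real.continuousAt_rpow_const p.2 _ (Or.inl (ne_of_gt hp.2))).comp
        continuous_snd.continuousAt |>.continuousWithinAt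
    · exact fun p hp => ne_of_gt (Real.rpow_pos_of_pos hp.2 _)
  · filter_upwards [ae_restrict_mem hmeasS] with p hp
    obtain ⟨hθ, hr⟩ := hp
    have hr0 : (0:ℝ) < p.2 := hr
    have hd : (0:ℝ) < p.2 ^ (1 + 2*β) := Real.rpow_pos_of_pos hr0 _
    set w : ℂ := (Complex.I * Real.cos p.1 - (l:ℂ) * Real.sin p.1) * ((k:ℂ) * (p.2:ℂ)) with hw
    have hwre : w.re ≤ 0 := by
      have hsin : (0:ℝ) ≤ Real.sin p.1 := Real.sin_nonneg_of_nonneg_of_le_pi hθ.1.le hθ.2.le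
      have : w.re = -(l * Real.sin p.1) * (k * p.2) := by
        rw [hw]
        simp only [Complex.mul_re, Complex.mul_im, Complex.sub_re, Complex.sub_im,
          Complex.I_re, Complex.I_im, Complex.ofReal_re, Complex.ofReal_im]
        ring
      rw [this]
      have : 0 ≤ (l * Real.sin p.1) * (k * p.2) := by
        have := hl.1
        positivity
      linarith
    have hwnorm : ‖w‖ ^ 2 ≤ 4 * k^2 * p.2^2 := by
      have h1 : ‖w‖ = ‖Complex.I * (Real.cos p.1 : ℂ) - (l:ℂ) * Real.sin p.1‖ * ‖(k:ℂ) * (p.2:ℂ)‖ := by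
        rw [hw, norm_mul]
      have h2 : ‖Complex.I * (Real.cos p.1 : ℂ) - (l:ℂ) * Real.sin p.1‖ ≤ 2 := by
        calc ‖Complex.I * (Real.cos p.1 : ℂ) - (l:ℂ) * Real.sin p.1‖
            ≤ ‖Complex.I * (Real.cos p.1 : ℂ)‖ + ‖(l:ℂ) * (Real.sin p.1 : ℂ)‖ := norm_sub_le _ _
          _ ≤ 1 + 1 := by
              rw [norm_mul, norm_mul, Complex.norm_I, one_mul, Complex.norm_real,
                Complex.norm_real, Complex.norm_real, Real.norm_eq_abs, Real.norm_eq_abs,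
                Real.norm_eq_abs]
              gcongr
              · exact abs_cos_le_one _
              · have h3 : |l| ≤ 1 := by rw [abs_of_nonneg hl.1]; exact hl.2
                calc |l| * |Real.sin p.1| ≤ 1 * 1 :=
                      mul_le_mul h3 (abs_sin_le_one _) (abs_nonneg _) zero_le_one
                  _ = 1 := by norm_num
          _ = 2 := by norm_num
      have h5 : ‖(k:ℂ) * (p.2:ℂ)‖ = k * p.2 := by
        rw [norm_mul, Complex.norm_real, Complex.norm_real, Real.norm_eq_abs, Real.norm_eq_abs,
          abs_of_pos hk, abs_of_pos hr0]
      have h6 : ‖w‖ ≤ 2 * (k * p.2) := by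
        rw [h1, h5]
        have : 0 ≤ k * p.2 := by positivity
        nlinarith
      nlinarith [norm_nonneg w]
    have hkey := norm_exp_sub_one_sq_le hwre
    have hmin : min 1 (‖w‖^2) ≤ (4*k^2 + 1) * min 1 (p.2^2) := by
      rcases le_or_gt (p.2^2) 1 with h | h
      · rw [min_eq_right h]
        calc min 1 (‖w‖^2) ≤ ‖w‖^2 := min_le_right _ _
          _ ≤ 4*k^2 * p.2^2 := hwnorm
          _ ≤ (4*k^2+1) * p.2^2 := by nlinarith
      · rw [min_eq_left h.le]
        calc min 1 (‖w‖^2) ≤ 1 := min_le_left _ _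
          _ ≤ (4*k^2+1) * 1 := by nlinarith
    have hnum : ‖Complex.exp w - 1‖^2 ≤ C * min 1 (p.2^2) := by
      calc ‖Complex.exp w - 1‖^2 ≤ 4 * min 1 (‖w‖^2) := hkey
        _ ≤ 4 * ((4*k^2+1) * min 1 (p.2^2)) := by
            have := hmin; nlinarith [min_le_left 1 (‖w‖^2), sq_nonneg p.2]
        _ = C * min 1 (p.2^2) := by rw [hC]; ring
    rw [Real.norm_eq_abs, abs_of_nonneg (by positivity)]
    calc ‖Complex.exp w - 1‖^2 / p.2 ^ (1+2*β) ≤ (C * min 1 (p.2^2)) / p.2 ^ (1+2*β) := by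
          gcongr
      _ = C * (min 1 (p.2^2) / p.2 ^ (1+2*β)) := mul_div_assoc _ _ _

private lemma inner_scaling {β l : ℝ} {k₁ : ℝ} (hk : 0 < k₁) (θ : ℝ) :
    ∫ r in Ioi (0:ℝ),
        ‖Complex.exp ((Complex.I * Real.cos θ - (l:ℂ) * Real.sin θ) * ((k₁:ℂ) * (r:ℂ))) - 1‖ ^ 2 /
          r ^ (1 + 2*β)
      = k₁ ^ (2*β) *
        ∫ r in Ioi (0:ℝ),
          ‖Complex.exp ((Complex.I * Real.cos θ - (l:ℂ) * Real.sin θ) * (r:ℂ)) - 1‖ ^ 2 /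
            r ^ (1 + 2*β) := by
  set u : ℂ := Complex.I * Real.cos θ - (l:ℂ) * Real.sin θ with hu
  set g : ℝ → ℝ := fun s => ‖Complex.exp (u * (s:ℂ)) - 1‖ ^ 2 / s ^ (1 + 2*β) with hg
  have hk1 : k₁ ^ (1 + 2*β) ≠ 0 := ne_of_gt (Real.rpow_pos_of_pos hk _)
  have h1 : ∀ r ∈ Ioi (0:ℝ),
      ‖Complex.exp (u * ((k₁:ℂ) * (r:ℂ))) - 1‖ ^ 2 / r ^ (1 + 2*β)
        = k₁ ^ (1 + 2*β) * g (k₁ * r) := by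
    intro r hr
    have hr0 : (0:ℝ) < r := hr
    have hcast : ((k₁ * r : ℝ) : ℂ) = (k₁:ℂ) * (r:ℂ) := by push_cast; ring
    have hrp : r ^ (1 + 2*β) ≠ 0 := ne_of_gt (Real.rpow_pos_of_pos hr0 _)
    rw [hg]
    simp only []
    rw [hcast, Real.mul_rpow hk.le hr0.le]
    field_simp
  rw [setIntegral_congr_fun measurableSet_Ioi h1, integral_const_mul,
    integral_comp_mul_left_Ioi g 0 hk, mul_zero, smul_eq_mul, ← mul_assoc]
  congr 1
  rw [Real.rpow_add hk, Real.rpow_one]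
  field_simp

/-- **Scaling identity and finiteness of the polar integral.**
For `β ∈ (0,1)` and `l ∈ [0,1]`, the polar integral
`J₁(l,β) = ∫_{θ=0}^π ∫_{r=0}^∞ |e^{(i cos θ - l sin θ) r} - 1|² / r^{1+2β} dr dθ`
is finite (i.e. the integrand is integrable on `(0,π) × (0,∞)`); moreover, if
`l ∈ (0,1]`, then for every `k₁ > 0`,
`∫_{z₁∈ℝ} ∫_{z₂>0} |e^{i k₁ z₁ - l k₁ z₂} - 1|² / (z₁²+z₂²)^{1+β} dz₂ dz₁
  = (k₁²)^β · J₁(l,β)`. -/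
theorem polar_integral_finite_and_scaling (β l : ℝ) (hβ : β ∈ Ioo (0:ℝ) 1)
    (hl : l ∈ Icc (0:ℝ) 1) :
    IntegrableOn
      (fun p : ℝ × ℝ =>
        ‖Complex.exp ((Complex.I * Real.cos p.1 - (l:ℂ) * Real.sin p.1) * (p.2:ℂ)) - 1‖ ^ 2 /
          p.2 ^ (1 + 2*β))
      (Ioo (0:ℝ) Real.pi ×ˢ Ioi (0:ℝ)) ∧
    (0 < l →
      ∀ k₁ : ℝ, 0 < k₁ →
        (∫ z₁ : ℝ, ∫ z₂ in Ioi (0:ℝ),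
            ‖Complex.exp (Complex.I * (k₁:ℂ) * (z₁:ℂ) - (l:ℂ) * (k₁:ℂ) * (z₂:ℂ)) - 1‖ ^ 2 /
              (z₁ ^ 2 + z₂ ^ 2) ^ (1 + β))
          = (k₁ ^ 2) ^ β *
            ∫ θ in Ioo (0:ℝ) Real.pi, ∫ r in Ioi (0:ℝ),
              ‖Complex.exp ((Complex.I * Real.cos θ - (l:ℂ) * Real.sin θ) * (r:ℂ)) - 1‖ ^ 2 /
                r ^ (1 + 2*β)) := by
  constructor
  · simpa using polar_integrand_integrable hβ hl one_pos
  · intro _ k₁ hk₁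
    -- Notation
    set F : ℝ × ℝ → ℝ := fun z =>
      ‖Complex.exp (Complex.I * (k₁:ℂ) * (z.1:ℂ) - (l:ℂ) * (k₁:ℂ) * (z.2:ℂ)) - 1‖ ^ 2 /
        (z.1 ^ 2 + z.2 ^ 2) ^ (1 + β) with hF
    set G : ℝ × ℝ → ℝ := (univ ×ˢ Ioi (0:ℝ)).indicator F with hG
    set Pk : ℝ × ℝ → ℝ := fun p =>
      ‖Complex.exp ((Complex.I * Real.cos p.1 - (l:ℂ) * Real.sin p.1) *
        ((k₁:ℂ) * (p.2:ℂ))) - 1‖ ^ 2 / p.2 ^ (1 + 2*β) with hPk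
    set S : Set (ℝ × ℝ) := Ioi (0:ℝ) ×ˢ Ioo (0:ℝ) Real.pi with hS
    have hSmeas : MeasurableSet S := measurableSet_Ioi.prod measurableSet_Ioo
    have hUmeas : MeasurableSet ((univ : Set ℝ) ×ˢ Ioi (0:ℝ)) :=
      MeasurableSet.univ.prod measurableSet_Ioi
    have hSsub : S ⊆ polarCoord.target := by
      rw [hS, polarCoord_target]
      exact prod_mono Subset.rfl (Ioo_subset_Ioo (by linarith [Real.pi_pos]) le_rfl)
    have hPkInt : IntegrableOn Pk (Ioo (0:ℝ) Real.pi ×ˢ Ioi (0:ℝ)) :=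
      polar_integrand_integrable hβ hl hk₁
    have hmeq : (volume : Measure (ℝ × ℝ)).restrict S =
        ((volume : Measure ℝ).restrict (Ioi (0:ℝ))).prod
          ((volume : Measure ℝ).restrict (Ioo (0:ℝ) Real.pi)) := by
      rw [Measure.prod_restrict, ← Measure.volume_eq_prod]
    have hmeq2 : (volume : Measure (ℝ × ℝ)).restrict (Ioo (0:ℝ) Real.pi ×ˢ Ioi (0:ℝ)) =
        ((volume : Measure ℝ).restrict (Ioo (0:ℝ) Real.pi)).prod
          ((volume : Measure ℝ).restrict (Ioi (0:ℝ))) := by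
      rw [Measure.prod_restrict, ← Measure.volume_eq_prod]
    have hmeqU : (volume : Measure (ℝ × ℝ)).restrict ((univ : Set ℝ) ×ˢ Ioi (0:ℝ)) =
        (volume : Measure ℝ).prod ((volume : Measure ℝ).restrict (Ioi (0:ℝ))) := by
      rw [Measure.volume_eq_prod, ← Measure.prod_restrict, Measure.restrict_univ]
    have hQint : IntegrableOn (fun q : ℝ × ℝ => Pk (q.2, q.1)) S := by
      rw [IntegrableOn, hmeq]
      rw [IntegrableOn, hmeq2] at hPkInt
      exact hPkInt.swap
    -- pointwise identity on the target of polar coordinates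
    have hpt : ∀ p ∈ polarCoord.target,
        p.1 • G (polarCoord.symm p) = S.indicator (fun q => Pk (q.2, q.1)) p := by
      intro p hp
      rw [polarCoord_target] at hp
      obtain ⟨hr, hθ⟩ := hp
      have hr0 : (0:ℝ) < p.1 := hr
      rw [polarCoord_symm_apply]
      by_cases hθ2 : p.2 ∈ Ioo (0:ℝ) Real.pi
      · have hsin : 0 < Real.sin p.2 := Real.sin_pos_of_pos_of_lt_pi hθ2.1 hθ2.2
        have hmem : ((p.1 * Real.cos p.2, p.1 * Real.sin p.2) : ℝ × ℝ) ∈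
            (univ : Set ℝ) ×ˢ Ioi (0:ℝ) := ⟨mem_univ _, mul_pos hr0 hsin⟩
        have hmemS : p ∈ S := ⟨hr, hθ2⟩
        rw [hG, indicator_of_mem hmem, indicator_of_mem hmemS, hF, hPk]
        simp only [smul_eq_mul]
        have hexp : Complex.I * (k₁:ℂ) * ((p.1 * Real.cos p.2 : ℝ):ℂ) -
            (l:ℂ) * (k₁:ℂ) * ((p.1 * Real.sin p.2 : ℝ):ℂ) =
            (Complex.I * (Real.cos p.2 : ℝ) - (l:ℂ) * (Real.sin p.2 : ℝ)) *
              ((k₁:ℂ) * (p.1:ℂ)) := by push_cast; ring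
        have hden : (p.1 * Real.cos p.2) ^ 2 + (p.1 * Real.sin p.2) ^ 2 = p.1 ^ 2 := by
          rw [mul_pow, mul_pow, ← mul_add, Real.cos_sq_add_sin_sq, mul_one]
        have h2 : ((p.1 ^ 2 : ℝ)) ^ (1 + β) = p.1 * p.1 ^ (1 + 2*β) := by
          rw [← Real.rpow_natCast p.1 2, ← Real.rpow_mul hr0.le]
          rw [show ((2:ℕ):ℝ) * (1 + β) = 1 + (1 + 2*β) by push_cast; ring]
          rw [Real.rpow_add hr0, Real.rpow_one]
        rw [hexp, hden, h2]
        have hne : p.1 ^ (1 + 2*β) ≠ 0 := ne_of_gt (Real.rpow_pos_of_pos hr0 _)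
        field_simp
      · have hθle : p.2 ≤ 0 := by
          by_contra h
          push_neg at h
          exact hθ2 ⟨h, hθ.2⟩
        have hsin : Real.sin p.2 ≤ 0 :=
          Real.sin_nonpos_of_nonpos_of_neg_pi_le hθle hθ.1.le
        have hnm : ((p.1 * Real.cos p.2, p.1 * Real.sin p.2) : ℝ × ℝ) ∉
            (univ : Set ℝ) ×ˢ Ioi (0:ℝ) := by
          intro hmem
          have h1 : (0:ℝ) < p.1 * Real.sin p.2 := hmem.2
          nlinarith
        have hnmS : p ∉ S := fun hmem => hθ2 hmem.2
        rw [hG, indicator_of_notMem hnm, indicator_of_notMem hnmS, smul_zero]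
    -- Integrability of G
    set B : ℝ × ℝ → ℝ × ℝ →L[ℝ] ℝ × ℝ := fun p =>
      LinearMap.toContinuousLinearMap (Matrix.toLin (Module.Basis.finTwoProd ℝ) (Module.Basis.finTwoProd ℝ)
        !![Real.cos p.2, -p.1 * Real.sin p.2; Real.sin p.2, p.1 * Real.cos p.2]) with hB
    have hBdet : ∀ p : ℝ × ℝ, (B p).det = p.1 := by
      intro p
      conv_rhs => rw [← one_mul p.1, ← Real.cos_sq_add_sin_sq p.2]
      simp only [hB, neg_mul, LinearMap.det_toContinuousLinearMap, LinearMap.det_toLin,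
        Matrix.det_fin_two_of, sub_neg_eq_add]
      ring
    have hder : ∀ p ∈ polarCoord.target,
        HasFDerivWithinAt polarCoord.symm (B p) polarCoord.target p :=
      fun p _ => (hasFDerivAt_polarCoord_symm p).hasFDerivWithinAt
    have hinj : InjOn polarCoord.symm polarCoord.target := polarCoord.symm.injOn
    have hiff := integrableOn_image_iff_integrableOn_abs_det_fderiv_smul volume
      polarCoord.open_target.measurableSet hder hinj G
    rw [polarCoord.symm_image_target_eq_source] at hiff
    have hRHSint : IntegrableOn
        (fun p => |(B p).det| • G (polarCoord.symm p)) polarCoord.target := by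
      have hind : IntegrableOn (S.indicator (fun q => Pk (q.2, q.1))) polarCoord.target :=
        ((integrable_indicator_iff hSmeas).mpr hQint).integrableOn
      refine hind.congr_fun ?_ polarCoord.open_target.measurableSet
      intro p hp
      have hr0 : (0:ℝ) < p.1 := by
        rw [polarCoord_target] at hp; exact hp.1
      show _ = |(B p).det| • G (polarCoord.symm p)
      rw [hBdet p, abs_of_pos hr0, ← hpt p hp]
    have hGsource : IntegrableOn G polarCoord.source := hiff.mpr hRHSint
    have hGint : Integrable G := by
      rw [IntegrableOn, Measure.restrict_congr_set polarCoord_source_ae_eq_univ,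
        Measure.restrict_univ] at hGsource
      exact hGsource
    have hFprod : Integrable F ((volume : Measure ℝ).prod
        ((volume : Measure ℝ).restrict (Ioi (0:ℝ)))) := by
      rw [← hmeqU]
      exact (integrable_indicator_iff hUmeas).mp hGint
    -- final computation
    have hpow : ((k₁ ^ 2 : ℝ)) ^ β = k₁ ^ (2*β) := by
      rw [← Real.rpow_natCast k₁ 2, ← Real.rpow_mul hk₁.le]
      norm_num
    rw [hpow]
    calc (∫ z₁ : ℝ, ∫ z₂ in Ioi (0:ℝ), F (z₁, z₂))
        = ∫ z, F z ∂(((volume : Measure ℝ)).prod ((volume : Measure ℝ).restrict (Ioi (0:ℝ)))) :=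
          (integral_prod F hFprod).symm
      _ = ∫ p, G p := by rw [← hmeqU, hG, integral_indicator hUmeas]
      _ = ∫ p in polarCoord.target, p.1 • G (polarCoord.symm p) :=
          (integral_comp_polarCoord_symm G).symm
      _ = ∫ p in polarCoord.target, S.indicator (fun q => Pk (q.2, q.1)) p :=
          setIntegral_congr_fun polarCoord.open_target.measurableSet hpt
      _ = ∫ p in S, Pk (p.2, p.1) := by
          rw [setIntegral_indicator hSmeas, inter_eq_self_of_subset_right hSsub]
      _ = ∫ q in Ioo (0:ℝ) Real.pi ×ˢ Ioi (0:ℝ), Pk q := by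
          rw [hmeq, hmeq2]
          exact integral_prod_swap Pk
      _ = ∫ θ in Ioo (0:ℝ) Real.pi, ∫ r in Ioi (0:ℝ), Pk (θ, r) := by
          rw [hmeq2]
          exact integral_prod Pk (by rw [← hmeq2]; exact hPkInt)
      _ = ∫ θ in Ioo (0:ℝ) Real.pi, k₁ ^ (2*β) *
            ∫ r in Ioi (0:ℝ),
              ‖Complex.exp ((Complex.I * Real.cos θ - (l:ℂ) * Real.sin θ) * (r:ℂ)) - 1‖ ^ 2 /
                r ^ (1 + 2*β) := by
          refine setIntegral_congr_fun measurableSet_Ioo fun θ _ => ?_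
          exact inner_scaling hk₁ θ
      _ = k₁ ^ (2*β) * ∫ θ in Ioo (0:ℝ) Real.pi, ∫ r in Ioi (0:ℝ),
            ‖Complex.exp ((Complex.I * Real.cos θ - (l:ℂ) * Real.sin θ) * (r:ℂ)) - 1‖ ^ 2 /
              r ^ (1 + 2*β) := integral_const_mul _ _
end
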